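/- Let f : ℝ⁴ → ℝ and h^k : ℝ⁴ → ℝ (k ∈ {4,…,9}) be differentiable with f(x) ≠ 0 for all x and with the normalization f(x)² + Σ_{k=4}^{9} (h^k(x))² = 1 for all x. Define ψ(x) := f(x)·1 + Σ_{k=4}^{9} h^k(x)·e₁ e_k, H_α^{1k} := 2f²·∂_α( h^k / f ), and A_α^{ij} := (1/f)·( H_α^{1i}·h^j − H_α^{1j}·h^i ) for i,j ∈ {4,…,9}. Then reverse(ψ)·ψ = 1 everywhere, and ψ satisfies the Killing spin field equation with these coefficients and all other coefficients zero; that is, for every α ∈ {0,1,2,3}: ∂_αψ = ( (1/2)·Σ_{k=4}^{9} H_α^{1k}·e₁ e_k + (1/4)·Σ_{i,j=4}^{9} A_α^{ij}·e_i e_j )·ψ. In particular the tangential connection coefficients vanish (ω_α^{μν} = 0). -/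

import Mathlib

open CliffordAlgebra

noncomputable section

/-- The Minkowski signs `(-1,1,…,1)` on `ℝ^{10}`. -/
def ηv : Fin 10 → ℝ := fun I => if I = 0 then -1 else 1

/-- The Minkowski metric `η = diag(-1,1,…,1)` as a matrix. -/
def ηm : Fin 10 → Fin 10 → ℝ := fun I J => if I = J then ηv I else 0

/-- The Minkowski quadratic form `Q(x) = -x₀² + x₁² + ⋯ + x₉²` on `ℝ^{10}`. -/
def Qm : QuadraticForm ℝ (Fin 10 → ℝ) := QuadraticMap.weightedSumSquares ℝ ηv

/-- The Clifford algebra of the Minkowski form on `ℝ^{10}`. -/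
abbrev Cl := CliffordAlgebra Qm

/-- The images `e_I` of the standard basis vectors of `ℝ^{10}` in `Cl`. -/
def e (I : Fin 10) : Cl := ι Qm (Pi.single I 1)

/-- Inclusion of tangent indices `{0,…,3}` into `{0,…,9}`. -/
def tIdx (μ : Fin 4) : Fin 10 := ⟨μ.1, by omega⟩

/-- Inclusion of normal indices `{4,…,9}` into `{0,…,9}`. -/
def nIdx (i : Fin 6) : Fin 10 := ⟨i.1 + 4, by omega⟩

/-- The spin field `ψ = f·1 + Σ_k h^k·e₁e_k` (`k` ranging over the normal indices). -/
def ψB (f : (Fin 4 → ℝ) → ℝ) (h : Fin 6 → (Fin 4 → ℝ) → ℝ) (x : Fin 4 → ℝ) : Cl :=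
  f x • (1 : Cl) + ∑ k : Fin 6, h k x • (e 1 * e (nIdx k))

/-- The extrinsic curvature `H_α^{1k} = 2f²·∂_α(h^k/f)`. -/
def HB (f : (Fin 4 → ℝ) → ℝ) (h : Fin 6 → (Fin 4 → ℝ) → ℝ)
    (α : Fin 4) (k : Fin 6) (x : Fin 4 → ℝ) : ℝ :=
  2 * (f x) ^ 2 * fderiv ℝ (fun y => h k y / f y) x (Pi.single α 1)

/-- The normal connection `A_α^{ij} = (1/f)·(H_α^{1i}h^j − H_α^{1j}h^i)`. -/
def AB (f : (Fin 4 → ℝ) → ℝ) (h : Fin 6 → (Fin 4 → ℝ) → ℝ)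
    (α : Fin 4) (i j : Fin 6) (x : Fin 4 → ℝ) : ℝ :=
  (1 / f x) * (HB f h α i x * h j x - HB f h α j x * h i x)

/-! ### Algebraic auxiliary lemmas -/

lemma Qm_single (I : Fin 10) : Qm (Pi.single I 1) = ηv I := by
  simp only [Qm, QuadraticMap.weightedSumSquares_apply, smul_eq_mul]
  rw [Finset.sum_eq_single I] <;> simp [Pi.single_apply]
  intro b hb; simp [hb]

lemma polar_single (I J : Fin 10) :
    QuadraticMap.polar Qm (Pi.single I 1) (Pi.single J 1) = if I = J then 2 * ηv I else 0 := by
  simp only [QuadraticMap.polar, Qm, QuadraticMap.weightedSumSquares_apply, smul_eq_mul]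
  rw [← Finset.sum_sub_distrib, ← Finset.sum_sub_distrib]
  by_cases h : I = J
  · subst h
    rw [Finset.sum_eq_single I]
    · simp [Pi.single_apply]; ring
    · intro b _ hb; simp [Pi.single_apply, hb.symm, Ne.symm hb]
    · simp
  · rw [Finset.sum_eq_zero]
    · simp [h]
    · intro b _
      rcases eq_or_ne b I with rfl | hbI <;> rcases eq_or_ne b J with rfl | hbJ <;>
        simp_all [Pi.single_apply]

/-- the normal vector with coefficients `c` -/
def vv (c : Fin 6 → ℝ) : Fin 10 → ℝ := ∑ k, c k • (Pi.single (nIdx k) (1:ℝ) : Fin 10 → ℝ)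

lemma ι_vv (c : Fin 6 → ℝ) : ι Qm (vv c) = ∑ k, c k • e (nIdx k) := by
  simp [vv, e, map_sum, map_smul]

lemma vv_lin (a b : ℝ) (c d : Fin 6 → ℝ) :
    ι Qm (vv (fun k => a * c k + b * d k)) = a • ι Qm (vv c) + b • ι Qm (vv d) := by
  simp only [ι_vv, Finset.smul_sum, ← Finset.sum_add_distrib, smul_smul, add_smul]

lemma polar_vv (a b : Fin 6 → ℝ) :
    QuadraticMap.polar Qm (vv a) (vv b) = 2 * ∑ k, a k * b k := by
  have h0 : QuadraticMap.polar Qm (vv a) (vv b)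
      = ∑ k, ∑ j, a k * (b j * QuadraticMap.polar Qm (Pi.single (nIdx k) 1) (Pi.single (nIdx j) 1)) := by
    rw [show QuadraticMap.polar Qm (vv a) (vv b) = Qm.polarBilin (vv a) (vv b) from rfl]
    simp only [vv, map_sum, LinearMap.sum_apply, map_smul, LinearMap.smul_apply, smul_eq_mul]
    simp only [Finset.mul_sum]
    rw [Finset.sum_comm]
    refine Finset.sum_congr rfl fun k _ => Finset.sum_congr rfl fun j _ => ?_
    rw [QuadraticMap.polarBilin_apply_apply]; ring
  rw [h0, Finset.mul_sum]
  refine Finset.sum_congr rfl fun k _ => ?_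
  rw [Finset.sum_eq_single k]
  · rw [polar_single]
    have : ηv (nIdx k) = 1 := by rw [ηv, if_neg (by fin_cases k <;> decide)]
    simp [this]; ring
  · intro j _ hj
    rw [polar_single]
    have : nIdx k ≠ nIdx j := by simp [nIdx, Fin.ext_iff]; omega
    simp [this]
  · simp

lemma polar_e1_vv (b : Fin 6 → ℝ) :
    QuadraticMap.polar Qm (Pi.single 1 1) (vv b) = 0 := by
  have h0 : QuadraticMap.polar Qm (Pi.single 1 1) (vv b)
      = ∑ j, b j * QuadraticMap.polar Qm (Pi.single (1:Fin 10) 1) (Pi.single (nIdx j) 1) := by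
    rw [show QuadraticMap.polar Qm (Pi.single 1 1) (vv b) = Qm.polarBilin (Pi.single 1 1) (vv b) from rfl]
    simp only [vv, map_sum, map_smul, smul_eq_mul]
    refine Finset.sum_congr rfl fun j _ => ?_
    rw [QuadraticMap.polarBilin_apply_apply]
  rw [h0, Finset.sum_eq_zero]
  intro j _
  rw [polar_single]
  have : (1 : Fin 10) ≠ nIdx j := by fin_cases j <;> decide
  simp [this]

lemma Qm_vv (c : Fin 6 → ℝ) : Qm (vv c) = ∑ k, (c k)^2 := by
  have h := polar_vv c c
  simp only [QuadraticMap.polar] at h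
  have h2 : Qm (vv c + vv c) = 4 * Qm (vv c) := by
    rw [show vv c + vv c = (2:ℝ) • vv c by module, QuadraticMap.map_smul]
    norm_num
  rw [h2] at h
  have h3 : Qm (vv c) = ∑ k, c k * c k := by linarith
  rw [h3]; exact Finset.sum_congr rfl fun k _ => (sq (c k)).symm

lemma e1_sq : e 1 * e 1 = 1 := by
  rw [e, ι_sq_scalar, Qm_single]
  norm_num [ηv]

lemma vv_sq (c : Fin 6 → ℝ) :
    ι Qm (vv c) * ι Qm (vv c) = algebraMap ℝ Cl (∑ k, (c k)^2) := by
  rw [ι_sq_scalar, Qm_vv]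

lemma vv_anticomm (a b : Fin 6 → ℝ) :
    ι Qm (vv a) * ι Qm (vv b) + ι Qm (vv b) * ι Qm (vv a)
      = algebraMap ℝ Cl (2 * ∑ k, a k * b k) := by
  rw [ι_mul_ι_add_swap, polar_vv]

lemma e1_vv_anticomm (b : Fin 6 → ℝ) :
    e 1 * ι Qm (vv b) = -(ι Qm (vv b) * e 1) := by
  have := ι_mul_ι_add_swap (Q := Qm) (Pi.single 1 1) (vv b)
  rw [polar_e1_vv, map_zero] at this
  rw [e]; exact eq_neg_of_add_eq_zero_left this

lemma mul_alg (r : ℝ) (x : Cl) : x * algebraMap ℝ Cl r = r • x := by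
  rw [← Algebra.commutes, ← Algebra.smul_def]

lemma key (F F' : ℝ) (E V W : Cl)
    (hE : E * E = 1)
    (hEV : E * V = -(V * E)) (hEW : E * W = -(W * E))
    (hV : V * V = algebraMap ℝ Cl (1 - F^2))
    (hWV : W * V + V * W = algebraMap ℝ Cl (-(2*F*F'))) :
    (F • (E*W) - F' • (E*V) + (2:ℝ)⁻¹ • (W*V - V*W)) * (F • (1:Cl) + E * V)
      = F' • 1 + E * W := by
  have hVE : V * E = -(E * V) := by rw [hEV, neg_neg]
  have hWE : W * E = -(E * W) := by rw [hEW, neg_neg]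
  have hWEV : W * (E * V) = -(E * (W * V)) := by
    rw [← mul_assoc, hWE, neg_mul, mul_assoc]
  have hVEV : V * (E * V) = -(E * (V * V)) := by
    rw [← mul_assoc, hVE, neg_mul, mul_assoc]
  have h1 : (E*W) * (E*V) = -(W*V) := by
    rw [mul_assoc, hWEV, mul_neg, ← mul_assoc, ← mul_assoc, hE, one_mul]
  have h2 : (E*V) * (E*V) = -((1 - F^2) • (1:Cl)) := by
    rw [mul_assoc, hVEV, mul_neg, ← mul_assoc, ← mul_assoc, hE, one_mul, hV,
      Algebra.algebraMap_eq_smul_one]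
  have hVWV : V * (W * V) = (-(2*F*F')) • V - (1 - F^2) • W := by
    have h : V * (W * V) + (V*V) * W = V * algebraMap ℝ Cl (-(2*F*F')) := by
      rw [← hWV]; noncomm_ring
    have h2' : V * algebraMap ℝ Cl (-(2*F*F')) = (-(2*F*F')) • V := mul_alg _ _
    have h3' : (V*V) * W = (1 - F^2) • W := by rw [hV, ← Algebra.smul_def]
    rw [h2', h3'] at h
    linear_combination (norm := abel) h
  have h3 : (W*V) * (E*V) = (1 - F^2) • (E*W) := by
    rw [mul_assoc, hVEV, mul_neg, ← mul_assoc, hWE, neg_mul, neg_neg, mul_assoc, hV,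
      mul_alg, mul_smul_comm]
  have h4 : (V*W) * (E*V) = (-(2*F*F')) • (E*V) - (1 - F^2) • (E*W) := by
    rw [mul_assoc, hWEV, mul_neg, ← mul_assoc, hVE, neg_mul, neg_neg, mul_assoc, hVWV,
      mul_sub, mul_smul_comm, mul_smul_comm]
  have hsub : W*V = (-(2*F*F')) • (1:Cl) - V*W := by
    rw [← Algebra.algebraMap_eq_smul_one]
    linear_combination (norm := abel) hWV
  simp only [add_mul, sub_mul, smul_mul_assoc, mul_add, mul_one, mul_smul_comm, smul_sub,
    h1, h2, h3, h4]
  rw [hsub]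
  match_scalars <;> ring

lemma key_rev (F : ℝ) (E V : Cl)
    (hE : E * E = 1)
    (hEV : E * V = -(V * E))
    (hV : V * V = algebraMap ℝ Cl (1 - F^2)) :
    (F • (1:Cl) - E * V) * (F • (1:Cl) + E * V) = 1 := by
  have hVE : V * E = -(E * V) := by rw [hEV, neg_neg]
  have hVEV : V * (E * V) = -(E * (V * V)) := by
    rw [← mul_assoc, hVE, neg_mul, mul_assoc]
  have h2 : (E*V) * (E*V) = -((1 - F^2) • (1:Cl)) := by
    rw [mul_assoc, hVEV, mul_neg, ← mul_assoc, ← mul_assoc, hE, one_mul, hV,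
      Algebra.algebraMap_eq_smul_one]
  simp only [sub_mul, mul_add, smul_mul_assoc, mul_smul_comm, mul_one, one_mul, smul_smul, h2]
  rw [show (1 : Cl) = (1:ℝ) • (1:Cl) from (one_smul ℝ _).symm]
  match_scalars <;> ring

lemma prod_sum (a b : Fin 6 → ℝ) :
    ι Qm (vv a) * ι Qm (vv b)
      = ∑ i, ∑ j, (a i * b j) • (e (nIdx i) * e (nIdx j)) := by
  rw [ι_vv, ι_vv, Finset.sum_mul]
  refine Finset.sum_congr rfl fun i _ => ?_
  rw [Finset.mul_sum]
  refine Finset.sum_congr rfl fun j _ => ?_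
  rw [smul_mul_assoc, mul_smul_comm, smul_smul]

/-- Spin fields of the type `f + Σ_k f^{1k}e₁e_k` are normalized and solve the Killing
spin field equation with the stated extrinsic curvature and normal connection, and with
vanishing tangential connection coefficients. -/
theorem stmt_9 (nCl : AddGroupNorm Cl)
    (hns : ∀ (c : ℝ) (x : Cl), nCl (c • x) ≤ ‖c‖ * nCl x) :
    letI : NormedAddCommGroup Cl := nCl.toNormedAddCommGroup
    letI : NormedSpace ℝ Cl := { norm_smul_le := hns }
    ∀ (f : (Fin 4 → ℝ) → ℝ) (h : Fin 6 → (Fin 4 → ℝ) → ℝ),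
      Differentiable ℝ f →
      (∀ k, Differentiable ℝ (h k)) →
      (∀ x, f x ≠ 0) →
      (∀ x, (f x) ^ 2 + ∑ k : Fin 6, (h k x) ^ 2 = 1) →
      (∀ x, reverse (Q := Qm) (ψB f h x) * ψB f h x = 1) ∧
      Differentiable ℝ (ψB f h) ∧
      ∀ (α : Fin 4) (x : Fin 4 → ℝ),
        fderiv ℝ (ψB f h) x (Pi.single α 1) =
          ((1/2 : ℝ) • ∑ k : Fin 6, HB f h α k x • (e 1 * e (nIdx k))
            + (1/4 : ℝ) • ∑ i : Fin 6, ∑ j : Fin 6, AB f h α i j x • (e (nIdx i) * e (nIdx j)))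
            * ψB f h x := by
  intro f h hf hh hf0 hnorm
  letI : NormedAddCommGroup Cl := nCl.toNormedAddCommGroup
  letI : NormedSpace ℝ Cl := { norm_smul_le := hns }
  -- the spin field written via `vv`
  have hψ : ∀ x, ψB f h x = f x • (1:Cl) + e 1 * ι Qm (vv (fun k => h k x)) := by
    intro x
    rw [ψB, ι_vv, Finset.mul_sum]
    simp only [mul_smul_comm]
  -- squared-norm of h
  have hsum : ∀ x, (∑ k, (h k x)^2) = 1 - (f x)^2 := by
    intro x; have := hnorm x; linarith
  -- differentiability
  have hdiff : Differentiable ℝ (ψB f h) := by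
    apply Differentiable.add
    · exact hf.smul_const _
    · exact Differentiable.fun_sum fun k _ => (hh k).smul_const _
  refine ⟨?_, hdiff, ?_⟩
  · -- normalization
    intro x
    have hrev : reverse (Q := Qm) (ψB f h x)
        = f x • (1:Cl) - e 1 * ι Qm (vv (fun k => h k x)) := by
      rw [hψ x, map_add, map_smul, reverse.map_one, reverse.map_mul, reverse_ι, e, reverse_ι,
        ← e]
      rw [show ι Qm (vv fun k => h k x) * e 1 = -(e 1 * ι Qm (vv fun k => h k x)) by
        rw [e1_vv_anticomm, neg_neg]]
      rw [sub_eq_add_neg]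
    rw [hrev, hψ x]
    exact key_rev (f x) (e 1) _ e1_sq (e1_vv_anticomm _)
      (by rw [vv_sq, hsum x])
  · -- the Killing spin field equation
    intro α x
    -- derivative data
    set F := f x with hF
    set F' := fderiv ℝ f x (Pi.single α 1) with hF'
    set cH : Fin 6 → ℝ := fun k => h k x with hcH
    set cH' : Fin 6 → ℝ := fun k => fderiv ℝ (h k) x (Pi.single α 1) with hcH'
    -- value of HB
    have hHB : ∀ k, HB f h α k x = 2 * (F * cH' k - cH k * F') := by
      intro k
      have hqd : DifferentiableAt ℝ (fun y => h k y / f y) x := by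
        have : (fun y => h k y / f y) = fun y => h k y * (f y)⁻¹ :=
          funext fun y => div_eq_mul_inv _ _
        rw [this]; exact ((hh k) x).mul ((hf x).inv (hf0 x))
      have hmul : HasFDerivAt (fun y => (h k y / f y) * f y)
          ((h k x / f x) • fderiv ℝ f x + f x • fderiv ℝ (fun y => h k y / f y) x) x :=
        hqd.hasFDerivAt.mul (hf x).hasFDerivAt
      have heq : (fun y => (h k y / f y) * f y) = h k :=
        funext fun y => div_mul_cancel₀ _ (hf0 y)
      rw [heq] at hmul
      have hd : fderiv ℝ (h k) x
          = (h k x / f x) • fderiv ℝ f x + f x • fderiv ℝ (fun y => h k y / f y) x :=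
        hmul.fderiv
      have happ : cH' k = (cH k / F) * F' + F * fderiv ℝ (fun y => h k y / f y) x (Pi.single α 1) := by
        simp only [hcH', hd, ContinuousLinearMap.add_apply, ContinuousLinearMap.coe_smul',
          Pi.smul_apply, smul_eq_mul]
        rfl
      rw [HB]
      have hFne : F ≠ 0 := hf0 x
      field_simp at happ ⊢
      nlinarith [happ]
    -- constraint derivative
    have hconstr : F * F' + ∑ k, cH k * cH' k = 0 := by
      have hsq : ∀ (g : (Fin 4 → ℝ) → ℝ), Differentiable ℝ g →
          HasFDerivAt (fun y => g y ^ 2) ((2 * g x) • fderiv ℝ g x) x := by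
        intro g hg
        have := (hg x).hasFDerivAt.mul (hg x).hasFDerivAt
        have heq : (g * g) = fun y => g y ^ 2 := funext fun y => (sq (g y)).symm
        rw [heq] at this
        rw [two_mul, add_smul]
        exact this
      have hg1 : HasFDerivAt (fun y => f y ^ 2 + ∑ k, h k y ^ 2)
          ((2 * F) • fderiv ℝ f x + ∑ k, (2 * cH k) • fderiv ℝ (h k) x) x := by
        exact (hsq f hf).add (HasFDerivAt.fun_sum fun k _ => hsq (h k) (hh k))
      have hg2 : HasFDerivAt (fun y : Fin 4 → ℝ => (1:ℝ)) (0 : (Fin 4 → ℝ) →L[ℝ] ℝ) x :=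
        hasFDerivAt_const _ _
      have heq : (fun y => f y ^ 2 + ∑ k, h k y ^ 2) = fun _ => (1:ℝ) :=
        funext fun y => hnorm y
      rw [heq] at hg1
      have h0 := hg1.unique hg2
      have := congrArg (fun L : (Fin 4 → ℝ) →L[ℝ] ℝ => L (Pi.single α 1)) h0
      simp only [ContinuousLinearMap.add_apply, ContinuousLinearMap.coe_sum',
        Finset.sum_apply, ContinuousLinearMap.coe_smul', Pi.smul_apply, smul_eq_mul,
        ContinuousLinearMap.zero_apply] at this
      have : 2 * F * F' + ∑ k, 2 * (cH k * cH' k) = 0 := by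
        rw [← this]; congr 1; ring_nf
        refine Finset.sum_congr rfl fun k _ => by ring
      have hsum2 : ∑ k, 2 * (cH k * cH' k) = 2 * ∑ k, cH k * cH' k := by
        rw [Finset.mul_sum]
      rw [hsum2] at this
      linarith
    -- LHS: derivative of ψB
    have hLHS : fderiv ℝ (ψB f h) x (Pi.single α 1) = F' • (1:Cl) + e 1 * ι Qm (vv cH') := by
      have hd1 : DifferentiableAt ℝ (fun y => f y • (1:Cl)) x := (hf x).smul_const _
      have hd2 : ∀ k : Fin 6, DifferentiableAt ℝ (fun y => h k y • (e 1 * e (nIdx k))) x :=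
        fun k => ((hh k) x).smul_const _
      have : fderiv ℝ (ψB f h) x = fderiv ℝ (fun y => f y • (1:Cl)
          + ∑ k : Fin 6, h k y • (e 1 * e (nIdx k))) x := rfl
      rw [this, fderiv_fun_add hd1 (DifferentiableAt.fun_sum fun k _ => hd2 k),
        fderiv_smul_const (hf x), fderiv_fun_sum fun k _ => hd2 k]
      simp only [ContinuousLinearMap.add_apply, ContinuousLinearMap.coe_sum',
        Finset.sum_apply, ContinuousLinearMap.smulRight_apply]
      congr 1
      rw [ι_vv, Finset.mul_sum]
      refine Finset.sum_congr rfl fun k _ => ?_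
      rw [fderiv_smul_const ((hh k) x), ContinuousLinearMap.smulRight_apply, mul_smul_comm]
    -- RHS : rewrite the bracket
    set V := ι Qm (vv cH) with hV
    set W := ι Qm (vv cH') with hW
    have hHsum : (∑ k : Fin 6, HB f h α k x • (e 1 * e (nIdx k)))
        = e 1 * ((2*F) • W - (2*F') • V) := by
      have : ((2*F) • W - (2*F') • V) = ι Qm (vv (fun k => (2*F) * cH' k + (-(2*F')) * cH k)) := by
        rw [vv_lin]; simp [sub_eq_add_neg, neg_smul]; rfl
      rw [this, ι_vv, Finset.mul_sum]
      refine Finset.sum_congr rfl fun k _ => ?_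
      rw [hHB k, mul_smul_comm]
      congr 1
      ring
    have hAsum : (∑ i : Fin 6, ∑ j : Fin 6, AB f h α i j x • (e (nIdx i) * e (nIdx j)))
        = (2:ℝ) • (W * V) - (2:ℝ) • (V * W) := by
      have hab : ∀ i j, AB f h α i j x = 2 * (cH' i * cH j) - 2 * (cH i * cH' j) := by
        intro i j
        rw [AB, hHB i, hHB j]
        have hFne : F ≠ 0 := hf0 x
        show (1 / F) * (2 * (F * cH' i - cH i * F') * cH j - 2 * (F * cH' j - cH j * F') * cH i) = _
        field_simp
        ring
      rw [hW, hV, prod_sum, prod_sum, Finset.smul_sum, Finset.smul_sum,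
        ← Finset.sum_sub_distrib]
      refine Finset.sum_congr rfl fun i _ => ?_
      rw [Finset.smul_sum, Finset.smul_sum, ← Finset.sum_sub_distrib]
      refine Finset.sum_congr rfl fun j _ => ?_
      rw [hab i j, smul_smul, smul_smul, ← sub_smul, sub_smul]
    rw [hLHS, hψ x, hHsum, hAsum]
    have hbr : ((1/2 : ℝ) • (e 1 * ((2*F) • W - (2*F') • V))
          + (1/4 : ℝ) • ((2:ℝ) • (W * V) - (2:ℝ) • (V * W)))
        = F • (e 1 * W) - F' • (e 1 * V) + (2:ℝ)⁻¹ • (W*V - V*W) := by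
      rw [mul_sub, mul_smul_comm, mul_smul_comm]
      match_scalars <;> ring
    rw [hbr]
    exact (key F F' (e 1) V W e1_sq (e1_vv_anticomm _) (e1_vv_anticomm _)
      (by rw [hV, vv_sq, hsum x])
      (by rw [hW, hV, vv_anticomm]
          congr 1
          have : ∑ k, cH' k * cH k = ∑ k, cH k * cH' k :=
            Finset.sum_congr rfl fun k _ => mul_comm _ _
          rw [this]
          linarith [hconstr])).symm
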